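/- Let C' be the biased Markov chain of an abstraction (C,F) →^α (C^•,F^•), let L : S⁺ → ℝ be such that f_{L,T} is B-bounded, γ the likelihood of (C,C'), and L' = L·γ. Then for every infinite path ρ of C' starting at s₀: f_{L',T}(ρ) = L(ρ_{≤ first_T(ρ)}) · μ^•(α(s₀)) if ρ visits T, and 0 otherwise. Consequently f_{L',T} is B-bounded, and in the special case L ≡ 1, f_{L',T} = μ^•(α(s₀)) · 𝟙_{◇T} on paths from s₀. -/

import Mathlib

open scoped ENNReal NNReal BigOperators
open Filter

noncomputable section

variable {S : Type*}

/-- Probability of following a finite path (list of successive states). -/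
def pathProb (P : S → S → ℝ≥0∞) : List S → ℝ≥0∞
  | [] => 1
  | [_] => 1
  | a :: b :: l => P a b * pathProb P (b :: l)

/-- `l` is a finite path starting at `s` that visits `T` for the first time
at its last element. -/
def FirstHitPath (T : Set S) (s : S) (l : List S) : Prop :=
  l.head? = some s ∧ ∃ h : l ≠ [], l.getLast h ∈ T ∧
    ∀ i : Fin l.length, (i : ℕ) + 1 < l.length → l.get i ∉ T

/-- Probability of eventually reaching `T` from `s`. -/
def reachProb (P : S → S → ℝ≥0∞) (T : Set S) (s : S) : ℝ≥0∞ :=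
  ∑' l : {l : List S // FirstHitPath T s l}, pathProb P (l : List S)

/-- The avoid set: states from which `T` is unreachable. -/
def Av (P : S → S → ℝ≥0∞) (T : Set S) : Set S := {s | reachProb P T s = 0}

/-- Probability that, starting from `s`, the chain stays outside `R`
during its first `n` steps (i.e. the hitting time of `R` is `> n`). -/
def surviveProb (P : S → S → ℝ≥0∞) (R : Set S) (s : S) (n : ℕ) : ℝ≥0∞ :=
  ∑' l : {l : List S // l.length = n + 1 ∧ l.head? = some s ∧ ∀ x ∈ l, x ∉ R},
    pathProb P (l : List S)

/-- Expected hitting time of `R` from `s`, via `E τ = ∑_{n≥0} Pr(τ > n)`. -/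
def expHittingTime (P : S → S → ℝ≥0∞) (R : Set S) (s : S) : ℝ≥0∞ :=
  ∑' n : ℕ, surviveProb P R s n

/-- Probability that `X_i ∈ A` for all `i ≥ m`, starting from `s`
(as the infimum over finite horizons). -/
def confineProb (P : S → S → ℝ≥0∞) (A : Set S) (s : S) (m : ℕ) : ℝ≥0∞ :=
  ⨅ n : ℕ, ∑' l : {l : List S // l.length = n + 1 ∧ l.head? = some s ∧
      ∀ i : Fin l.length, m ≤ (i : ℕ) → l.get i ∈ A}, pathProb P (l : List S)

/-- Expected reward collected at the first visit of `T`. -/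
def expReward (P : S → S → ℝ≥0∞) (L : List S → ℝ≥0∞) (T : Set S) (s : S) : ℝ≥0∞ :=
  ∑' l : {l : List S // FirstHitPath T s l}, L l * pathProb P (l : List S)

/-- `P` is a stochastic matrix. -/
def IsStochastic (P : S → S → ℝ≥0∞) : Prop := ∀ s, ∑' s', P s s' = 1

/-- States of the biased chain other than `s₋`. -/
abbrev SA (P : S → S → ℝ≥0∞) (F : Set S) := {s : S // s ∉ Av P F}

/-- `P'` (on `(S ∖ Av(F)) ⊎ {s₋}`, with `none = s₋`) is a biased Markov chain
of `(C, T, F)`. -/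
def IsBiased (P : S → S → ℝ≥0∞) (T F : Set S)
    (P' : Option (SA P F) → Option (SA P F) → ℝ≥0∞) : Prop :=
  IsStochastic P' ∧
  P' none none = 1 ∧
  (∀ s : SA P F, s.val ∈ T → P' (some s) (some s) = 1) ∧
  (∀ s s' : SA P F, 0 < P s.val s'.val → 0 < P' (some s) (some s'))

/-- `(C^•, F^•)` together with `α` is an abstraction of `(C, F)`. -/
def IsAbstraction (P : S → S → ℝ≥0∞) (F : Set S)
    {S' : Type*} (P' : S' → S' → ℝ≥0∞) (F' : Set S')
    (α : SA P F → S') : Prop :=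
  (∀ s : SA P F, s.val ∈ F → α s ∈ F') ∧
  (∀ s : SA P F, s.val ∉ F →
    ∑' s' : SA P F, P s.val s'.val * reachProb P' F' (α s')
      ≤ reachProb P' F' (α s))

/-- The decreasing ratio `h(s)` of an abstraction. -/
def hRatio (P : S → S → ℝ≥0∞) (F : Set S)
    {S' : Type*} (P' : S' → S' → ℝ≥0∞) (F' : Set S')
    (α : SA P F → S') (s : SA P F) : ℝ≥0∞ :=
  (∑' s' : SA P F, P s.val s'.val * reachProb P' F' (α s'))
    / reachProb P' F' (α s)

/-- The biased Markov chain constructed from an abstraction. -/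
def biasedKernel (P : S → S → ℝ≥0∞) (F : Set S)
    {S' : Type*} (P' : S' → S' → ℝ≥0∞) (F' : Set S')
    (α : SA P F → S') :
    Option (SA P F) → Option (SA P F) → ℝ≥0∞
  | none, none => 1
  | none, some _ => 0
  | some s, none => 1 - hRatio P F P' F' α s
  | some s, some s' =>
      P s.val s'.val * reachProb P' F' (α s') / reachProb P' F' (α s)

/-- The random walk `W^p` on `ℕ`: `0` absorbing, up with probability `p`,
down with probability `1 - p`. -/
def walkKernel (p : ℝ≥0∞) : ℕ → ℕ → ℝ≥0∞ := fun m n =>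
  if m = 0 then (if n = 0 then 1 else 0)
  else if n = m + 1 then p
  else if n + 1 = m then 1 - p
  else 0

/-- `(C, λ)` is a layered Markov chain. -/
def IsLMC (P : S → S → ℝ≥0∞) (lam : S → ℕ) : Prop :=
  (∀ s s', 0 < P s s' → (lam s : ℤ) ≤ (lam s' : ℤ) + 1) ∧
  (∀ n : ℕ, {s : S | lam s = n}.Finite)

/-- Total probability of increasing the level. -/
def Pup (P : S → S → ℝ≥0∞) (lam : S → ℕ) (s : S) : ℝ≥0∞ :=
  ∑' s' : {s' : S // lam s < lam s'}, P s s'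

/-- Total probability of decreasing the level (by one). -/
def Pdown (P : S → S → ℝ≥0∞) (lam : S → ℕ) (s : S) : ℝ≥0∞ :=
  ∑' s' : {s' : S // lam s' + 1 = lam s}, P s s'

/-- Total probability of keeping the same level. -/
def Peq (P : S → S → ℝ≥0∞) (lam : S → ℕ) (s : S) : ℝ≥0∞ :=
  ∑' s' : {s' : S // lam s' = lam s}, P s s'

/-- `(C, λ)` is `(p⁺, N₀)`-divergent. -/
def Divergent (P : S → S → ℝ≥0∞) (lam : S → ℕ) (pplus : ℝ≥0∞) (N₀ : ℕ) : Prop :=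
  1/2 < pplus ∧ ∀ s : S, N₀ < lam s → Peq P lam s < 1 →
    pplus ≤ Pup P lam s / (Pdown P lam s + Pup P lam s)

end

open scoped Classical



section AuxLemmas

variable {S : Type*}

-- basic lemmas

lemma pathProb_cons_cons (P : S → S → ℝ≥0∞) (a b : S) (l : List S) :
    pathProb P (a :: b :: l) = P a b * pathProb P (b :: l) := rfl

lemma P_le_one {P : S → S → ℝ≥0∞} (hP : IsStochastic P) (a b : S) : P a b ≤ 1 :=
  (ENNReal.le_tsum b).trans (hP a).le

lemma pathProb_le_one {P : S → S → ℝ≥0∞} (hP : IsStochastic P) :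
    ∀ l : List S, pathProb P l ≤ 1
  | [] => le_refl _
  | [_] => le_refl _
  | a :: b :: l => by
      rw [pathProb_cons_cons]
      calc P a b * pathProb P (b :: l) ≤ 1 * 1 :=
        mul_le_mul' (P_le_one hP a b) (pathProb_le_one hP (b :: l))
      _ = 1 := one_mul 1

lemma fh_singleton {T : Set S} {s : S} (hs : s ∈ T) : FirstHitPath T s [s] :=
  ⟨rfl, by simp, by simpa using hs, fun i hi => absurd hi (by simp)⟩

lemma fh_eq_singleton {T : Set S} {s : S} {l : List S} (hs : s ∈ T)
    (h : FirstHitPath T s l) : l = [s] := by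
  obtain ⟨hhead, hne, hlast, hmid⟩ := h
  match l, hne with
  | [a], _ => simp_all
  | a :: b :: t, _ =>
    exfalso
    simp at hhead
    exact hmid ⟨0, by simp⟩ (by simp) (by simpa [hhead] using hs)

lemma eq_cons_tail {s : S} {l : List S} (h : l.head? = some s) : l = s :: l.tail := by
  cases l <;> simp_all

lemma fh_two_le {T : Set S} {s : S} {l : List S} (hs : s ∉ T)
    (h : FirstHitPath T s l) : 2 ≤ l.length := by
  obtain ⟨hhead, hne, hlast, hmid⟩ := h
  match l, hne with
  | [a], _ =>
    exfalso
    simp at hhead hlast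
    exact hs (hhead ▸ hlast)
  | a :: b :: t, _ => simp

lemma fh_tail_ne {T : Set S} {s : S} {l : List S} (hs : s ∉ T)
    (h : FirstHitPath T s l) : l.tail ≠ [] := by
  have := fh_two_le hs h
  match l with
  | a :: b :: t => simp

lemma fh_tail {T : Set S} {s : S} {l : List S} (hs : s ∉ T)
    (h : FirstHitPath T s l) :
    FirstHitPath T (l.tail.head (fh_tail_ne hs h)) l.tail := by
  obtain ⟨hhead, hne, hlast, hmid⟩ := h
  match l, hne with
  | a :: b :: t, _ =>
    refine ⟨by simp, by simp, ?_, ?_⟩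
    · simpa [List.getLast_cons] using hlast
    · intro i hi
      have := hmid ⟨(i : ℕ) + 1, by simp at hi ⊢; try omega⟩ (by simp at hi ⊢; try omega)
      simp at this; exact this

-- rN

lemma rN_le_one {P : S → S → ℝ≥0∞} (hP : IsStochastic P) (T : Set S) :
    ∀ (n : ℕ) (s : S),
      (∑' l : {l : List S // FirstHitPath T s l},
        if (l : List S).length ≤ n then pathProb P (l : List S) else 0) ≤ 1 := by
  intro n
  induction n with
  | zero =>
    intro s
    have : ∀ l : {l : List S // FirstHitPath T s l},
        (if (l : List S).length ≤ 0 then pathProb P (l : List S) else 0) = 0 := by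
      rintro ⟨l, hl⟩
      obtain ⟨_, hne, _⟩ := hl
      have : l.length ≠ 0 := by simpa using hne
      simp [this]
    simp only [this, tsum_zero]; exact zero_le_one
  | succ n ih =>
    intro s
    by_cases hs : s ∈ T
    · haveI : Subsingleton {l : List S // FirstHitPath T s l} :=
        ⟨fun a b => Subtype.ext ((fh_eq_singleton hs a.2).trans (fh_eq_singleton hs b.2).symm)⟩
      rcases isEmpty_or_nonempty {l : List S // FirstHitPath T s l} with he | hne
      · simp [tsum_empty]
      · obtain ⟨x⟩ := hne
        rw [tsum_eq_single x (fun b hb => (hb (Subsingleton.elim b x)).elim)]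
        have hx : (x : List S) = [s] := fh_eq_singleton hs x.2
        split_ifs <;> simp [hx, pathProb]
    · -- decompose
      set f : {l : List S // FirstHitPath T s l} → ℝ≥0∞ :=
        fun l => if (l : List S).length ≤ n + 1 then pathProb P (l : List S) else 0 with hf
      set g : (Σ s' : S, {t : List S // FirstHitPath T s' t}) → ℝ≥0∞ :=
        fun p => P s p.1 * (if (p.2 : List S).length ≤ n then pathProb P (p.2 : List S) else 0)
        with hg
      set e : {l : List S // FirstHitPath T s l} → Σ s' : S, {t : List S // FirstHitPath T s' t} :=
        fun l => ⟨_, ⟨(l : List S).tail, fh_tail hs l.2⟩⟩ with he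
      have hinj : Function.Injective e := by
        rintro ⟨l₁, h₁⟩ ⟨l₂, h₂⟩ hee
        have htail : l₁.tail = l₂.tail := by
          have := congrArg (fun p => (p.2 : List S)) hee
          simpa [he] using this
        apply Subtype.ext
        have e1 : l₁ = s :: l₁.tail := eq_cons_tail h₁.1
        have e2 : l₂ = s :: l₂.tail := eq_cons_tail h₂.1
        show l₁ = l₂
        rw [e1, e2, htail]
      have hle : ∀ l, f l ≤ g (e l) := by
        rintro ⟨l, hl⟩
        have h2 := fh_two_le hs hl
        match l, hl, h2 with
        | a :: b :: t, hl, _ =>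
          have ha : a = s := by simpa using hl.1
          subst ha
          apply le_of_eq
          show (if (a :: b :: t).length ≤ n + 1 then pathProb P (a :: b :: t) else 0)
              = P a b * (if (b :: t).length ≤ n then pathProb P (b :: t) else 0)
          rw [pathProb_cons_cons, mul_ite, mul_zero]
          simp only [List.length_cons, Nat.add_le_add_iff_right]
      calc ∑' l, f l ≤ ∑' p, g p :=
            ENNReal.summable.tsum_le_tsum_of_inj e hinj (fun c _ => zero_le) hle
              ENNReal.summable
        _ = ∑' s' : S, P s s' * (∑' t : {t : List S // FirstHitPath T s' t},
              if (t : List S).length ≤ n then pathProb P (t : List S) else 0) := by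
            rw [ENNReal.tsum_sigma' g]
            exact tsum_congr fun s' =>
              ENNReal.tsum_mul_left (a := P s s')
                (f := fun t : {t : List S // FirstHitPath T s' t} =>
                  if (t : List S).length ≤ n then pathProb P (t : List S) else 0)
        _ ≤ ∑' s' : S, P s s' * 1 := ENNReal.tsum_le_tsum fun s' =>
              mul_le_mul_right (ih s') _
        _ = 1 := by simpa using hP s

lemma reachProb_le_one {P : S → S → ℝ≥0∞} (hP : IsStochastic P) (T : Set S) (s : S) :
    reachProb P T s ≤ 1 := by
  rw [reachProb, ENNReal.tsum_eq_iSup_sum]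
  apply iSup_le
  intro F
  set n := F.sup (fun l => (l : List S).length) with hn
  calc ∑ l ∈ F, pathProb P (l : List S)
      = ∑ l ∈ F, (if (l : List S).length ≤ n then pathProb P (l : List S) else 0) := by
        refine Finset.sum_congr rfl fun l hl => ?_
        have hll : (l : List S).length ≤ n :=
          Finset.le_sup (f := fun l : {l : List S // FirstHitPath T s l} =>
            (l : List S).length) hl
        rw [if_pos hll]
    _ ≤ ∑' l : {l : List S // FirstHitPath T s l},
          if (l : List S).length ≤ n then pathProb P (l : List S) else 0 :=
        ENNReal.summable.sum_le_tsum F (fun _ _ => zero_le)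
    _ ≤ 1 := rN_le_one hP T n s

lemma reachProb_eq_one {P : S → S → ℝ≥0∞} (hP : IsStochastic P) {T : Set S} {s : S}
    (hs : s ∈ T) : reachProb P T s = 1 := by
  refine le_antisymm (reachProb_le_one hP T s) ?_
  have := ENNReal.le_tsum (f := fun l : {l : List S // FirstHitPath T s l} =>
    pathProb P (l : List S)) ⟨[s], fh_singleton hs⟩
  simpa [pathProb, reachProb] using this


lemma pathProb_singleton (P : S → S → ℝ≥0∞) (a : S) : pathProb P [a] = 1 := rfl

lemma pathProb_mul_pos {Q : S → S → ℝ≥0∞} {a b : S} {t : List S}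
    (h : 0 < pathProb Q (a :: b :: t)) :
    0 < Q a b ∧ 0 < pathProb Q (b :: t) := by
  rw [pathProb_cons_cons] at h
  exact CanonicallyOrderedAdd.mul_pos.mp h

lemma pathProb_step_pos {Q : S → S → ℝ≥0∞} :
    ∀ (l : List S), 0 < pathProb Q l → ∀ (i : ℕ) (h : i + 1 < l.length),
      0 < Q (l.get ⟨i, by omega⟩) (l.get ⟨i + 1, h⟩)
  | [], _, i, h => by simp at h
  | [a], _, i, h => by simp at h
  | a :: b :: t, hpos, 0, h => (pathProb_mul_pos hpos).1
  | a :: b :: t, hpos, (i+1), h =>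
      pathProb_step_pos (b :: t) (pathProb_mul_pos hpos).2 i (by simpa using h)

lemma none_not_mem {X : Type*} {Q : Option X → Option X → ℝ≥0∞}
    (hQ : ∀ x : X, Q none (some x) = 0) {l : List (Option X)}
    (hpos : 0 < pathProb Q l) (hne : l ≠ []) {u : X}
    (hlast : l.getLast hne = some u) : none ∉ l := by
  intro hmem
  obtain ⟨i, hi⟩ := List.mem_iff_get.mp hmem
  have key : ∀ j, (i : ℕ) ≤ j → ∀ hlt : j < l.length, l.get ⟨j, hlt⟩ = none := by
    intro j
    refine Nat.le_induction ?_ ?_ j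
    · intro hlt
      have : (⟨(i : ℕ), hlt⟩ : Fin l.length) = i := Fin.ext rfl
      rw [this]; exact hi
    · intro n _ ihn hlt2
      have hn : n < l.length := by omega
      have hstep := pathProb_step_pos l hpos n hlt2
      rw [ihn hn] at hstep
      cases hx : l.get ⟨n + 1, hlt2⟩ with
      | none => rfl
      | some x => rw [hx, hQ x] at hstep; exact absurd hstep (lt_irrefl 0)
  have hi2 := i.2
  have hfin := key (l.length - 1) (by omega) (by omega)
  rw [List.getLast_eq_getElem] at hlast; change l.get ⟨l.length - 1, _⟩ = some u at hlast
  rw [hfin] at hlast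
  exact nomatch hlast

lemma eq_reduceOption_map {X : Type*} : ∀ (l : List (Option X)), none ∉ l →
    l.reduceOption.map some = l
  | [], _ => rfl
  | (none :: t), h => absurd (by simp) h
  | (some a :: t), h => by
      rw [List.reduceOption_cons_of_some, List.map_cons,
        eq_reduceOption_map t (fun hc => h (List.mem_cons_of_mem _ hc))]

lemma get_map_aux {X Y : Type*} (f : X → Y) (l : List X) (n : Fin (l.map f).length) :
    (l.map f).get n = f (l.get ⟨n, by simpa using n.2⟩) := by simp

lemma fh_map_iff {X Y : Type*} {f : X → Y} (hf : Function.Injective f)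
    {T : Set X} {T' : Set Y} (hT : ∀ x, f x ∈ T' ↔ x ∈ T) (s : X) (m : List X) :
    FirstHitPath T' (f s) (m.map f) ↔ FirstHitPath T s m := by
  have hlen : (m.map f).length = m.length := by simp
  constructor
  · rintro ⟨hh, hne, hlast, hmid⟩
    have hm : m ≠ [] := by simpa using hne
    refine ⟨?_, hm, ?_, ?_⟩
    · cases m with
      | nil => simp at hm
      | cons a t =>
        simp only [List.map_cons, List.head?_cons, Option.some_inj] at hh ⊢
        exact hf hh
    · have h2 := hlast
      rw [List.getLast_map] at h2
      exact (hT _).mp h2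
    · intro i hi
      have h2 := hmid ⟨(i : ℕ), by omega⟩ (by simpa [hlen] using hi)
      rw [get_map_aux] at h2
      intro hc
      exact h2 ((hT _).mpr hc)
  · rintro ⟨hh, hm, hlast, hmid⟩
    have hne : m.map f ≠ [] := by simpa using hm
    refine ⟨?_, hne, ?_, ?_⟩
    · rw [List.head?_map, hh]; rfl
    · rw [List.getLast_map]; exact (hT _).mpr hlast
    · intro i hi
      rw [get_map_aux]
      intro hc
      have hi' : (i : ℕ) + 1 < m.length := by omega
      exact hmid ⟨(i : ℕ), by omega⟩ hi' ((hT _).mp hc)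

lemma bk_some_some (P : S → S → ℝ≥0∞) (F : Set S) {S' : Type*} (P' : S' → S' → ℝ≥0∞)
    (F' : Set S') (α : SA P F → S') (a b : SA P F) :
    biasedKernel P F P' F' α (some a) (some b)
      = P a.val b.val * reachProb P' F' (α b) / reachProb P' F' (α a) := rfl

lemma tele (P : S → S → ℝ≥0∞) (F : Set S) {S' : Type*} (P' : S' → S' → ℝ≥0∞)
    (F' : Set S') (α : SA P F → S') :
    ∀ (m : List (SA P F)) (a : SA P F),
      (∀ s ∈ a :: m, reachProb P' F' (α s) ≠ 0) →
      (∀ s ∈ a :: m, reachProb P' F' (α s) ≠ ⊤) →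
      reachProb P' F' (α a) * pathProb (biasedKernel P F P' F' α) ((a :: m).map some)
        = pathProb P ((a :: m).map Subtype.val)
            * reachProb P' F' (α ((a :: m).getLast (by simp)))
  | [], a, _, _ => by
      simp only [List.map_cons, List.map_nil, pathProb_singleton, mul_one, one_mul,
        List.getLast_singleton]
  | b :: t, a, h0, ht => by
      have h0a : reachProb P' F' (α a) ≠ 0 := h0 a (by simp)
      have hta : reachProb P' F' (α a) ≠ ⊤ := ht a (by simp)
      have IH := tele P F P' F' α t b (fun s hs => h0 s (List.mem_cons_of_mem _ hs))
        (fun s hs => ht s (List.mem_cons_of_mem _ hs))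
      have hlast : ((a :: b :: t).getLast (by simp)) = ((b :: t).getLast (by simp)) :=
        List.getLast_cons (by simp)
      rw [hlast]
      calc reachProb P' F' (α a) * pathProb (biasedKernel P F P' F' α) ((a :: b :: t).map some)
          = reachProb P' F' (α a) *
              ((P a.val b.val * reachProb P' F' (α b) / reachProb P' F' (α a)) *
                pathProb (biasedKernel P F P' F' α) ((b :: t).map some)) := rfl
        _ = (reachProb P' F' (α a) *
              (P a.val b.val * reachProb P' F' (α b) / reachProb P' F' (α a))) *
                pathProb (biasedKernel P F P' F' α) ((b :: t).map some) := (mul_assoc _ _ _).symm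
        _ = (P a.val b.val * reachProb P' F' (α b)) *
                pathProb (biasedKernel P F P' F' α) ((b :: t).map some) := by
              rw [ENNReal.mul_div_cancel h0a hta]
        _ = P a.val b.val * (reachProb P' F' (α b) *
                pathProb (biasedKernel P F P' F' α) ((b :: t).map some)) := mul_assoc _ _ _
        _ = P a.val b.val * (pathProb P ((b :: t).map Subtype.val)
                * reachProb P' F' (α ((b :: t).getLast (by simp)))) := by rw [IH]
        _ = (P a.val b.val * pathProb P ((b :: t).map Subtype.val))
                * reachProb P' F' (α ((b :: t).getLast (by simp))) := (mul_assoc _ _ _).symm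
        _ = pathProb P ((a :: b :: t).map Subtype.val)
                * reachProb P' F' (α ((b :: t).getLast (by simp))) := rfl

end AuxLemmas

section Thms

variable {S : Type*}

theorem stmt11 [Countable S] (P : S → S → ℝ≥0∞) (hP : IsStochastic P)
    (F : Set S) {S' : Type*} [Countable S']
    (P' : S' → S' → ℝ≥0∞) (hP' : IsStochastic P') (F' : Set S')
    (α : SA P F → S') (habs : IsAbstraction P F P' F' α)
    (T : Set S) (hTF : T ⊆ F) (habsT : ∀ s ∈ T, P s s = 1)
    (L : List S → ℝ) (B : ℝ)
    (hbdd : ∀ (s : S) (l : List S), FirstHitPath T s l → |L l| ≤ B)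
    (s₀ : SA P F) (l : List (Option (SA P F)))
    (hfh : FirstHitPath
      {x : Option (SA P F) | ∃ u : SA P F, x = some u ∧ u.val ∈ T}
      (some s₀) l)
    (hpos : 0 < pathProb (biasedKernel P F P' F' α) l) :
    (if none ∈ l then 0 else
      L (l.reduceOption.map Subtype.val) *
        (pathProb P (l.reduceOption.map Subtype.val) /
          pathProb (biasedKernel P F P' F' α) l).toReal)
      = L (l.reduceOption.map Subtype.val) * (reachProb P' F' (α s₀)).toReal ∧
    |(if none ∈ l then 0 else
      L (l.reduceOption.map Subtype.val) *
        (pathProb P (l.reduceOption.map Subtype.val) /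
          pathProb (biasedKernel P F P' F' α) l).toReal)| ≤ B ∧
    ((∀ l' : List S, L l' = 1) →
      (if none ∈ l then 0 else
        L (l.reduceOption.map Subtype.val) *
          (pathProb P (l.reduceOption.map Subtype.val) /
            pathProb (biasedKernel P F P' F' α) l).toReal)
        = (reachProb P' F' (α s₀)).toReal) := by
  classical
  -- basic facts
  have hμle : ∀ s : SA P F, reachProb P' F' (α s) ≤ 1 :=
    fun s => reachProb_le_one hP' F' (α s)
  have hμtop : ∀ s : SA P F, reachProb P' F' (α s) ≠ ⊤ :=
    fun s => ((hμle s).trans_lt ENNReal.one_lt_top).ne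
  obtain ⟨hhead, hlne, hlastT, hmid⟩ := hfh
  obtain ⟨u, hueq, huT⟩ := hlastT
  have hfh' : FirstHitPath {x : Option (SA P F) | ∃ u : SA P F, x = some u ∧ u.val ∈ T}
      (some s₀) l := ⟨hhead, hlne, ⟨u, hueq, huT⟩, hmid⟩
  have hnone : none ∉ l :=
    none_not_mem (fun _ => rfl) hpos hlne hueq
  have hlm : l.reduceOption.map some = l := eq_reduceOption_map l hnone
  have hfh2 : FirstHitPath {x : Option (SA P F) | ∃ u : SA P F, x = some u ∧ u.val ∈ T}
      (some s₀) (l.reduceOption.map some) := by rw [hlm]; exact hfh'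
  have hfhm : FirstHitPath {u : SA P F | u.val ∈ T} s₀ l.reduceOption :=
    (fh_map_iff (Option.some_injective _) (fun x => by
      constructor
      · rintro ⟨u, hxu, hu⟩
        obtain rfl := Option.some_inj.mp hxu
        exact hu
      · intro hx
        exact ⟨x, rfl, hx⟩) s₀ l.reduceOption).mp hfh2
  have hfhv : FirstHitPath T s₀.val (l.reduceOption.map Subtype.val) :=
    (fh_map_iff Subtype.val_injective (fun x => Iff.rfl) s₀ l.reduceOption).mpr hfhm
  obtain ⟨mt, hcons⟩ : ∃ mt, l.reduceOption = s₀ :: mt :=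
    ⟨l.reduceOption.tail, eq_cons_tail hfhm.1⟩
  have hlm2 : l = (s₀ :: mt).map some := by rw [← hcons, hlm]
  have hmne : (s₀ :: mt : List (SA P F)) ≠ [] := by simp
  have hlastmem : ((s₀ :: mt).getLast hmne).val ∈ T := by
    have h2 := hfhm.2
    obtain ⟨hne2, hl2, _⟩ := h2
    have : l.reduceOption.getLast hne2 = (s₀ :: mt).getLast hmne := by
      congr 1
    rw [this] at hl2
    exact hl2
  have hμlast : reachProb P' F' (α ((s₀ :: mt).getLast hmne)) = 1 :=
    reachProb_eq_one hP' (habs.1 _ (hTF hlastmem))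
  have hposm : 0 < pathProb (biasedKernel P F P' F' α) ((s₀ :: mt).map some) := by
    rw [← hlm2]; exact hpos
  -- the key ratio identity
  have hratio : pathProb P ((s₀ :: mt).map Subtype.val) /
      pathProb (biasedKernel P F P' F' α) ((s₀ :: mt).map some)
      = reachProb P' F' (α s₀) := by
    by_cases h0 : reachProb P' F' (α s₀) = 0
    · -- degenerate case: the biased path probability is ⊤, ratio is 0
      cases mt with
      | nil =>
        exfalso
        have : (s₀ :: ([] : List (SA P F))).getLast hmne = s₀ := rfl
        rw [this] at hμlast
        rw [hμlast] at h0
        exact one_ne_zero h0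
      | cons c t =>
        have hsplit : pathProb (biasedKernel P F P' F' α) ((s₀ :: c :: t).map some)
            = biasedKernel P F P' F' α (some s₀) (some c) *
              pathProb (biasedKernel P F P' F' α) ((c :: t).map some) := rfl
        rw [hsplit] at hposm
        obtain ⟨hK1, hK2⟩ := CanonicallyOrderedAdd.mul_pos.mp hposm
        have hnum : P s₀.val c.val * reachProb P' F' (α c) ≠ 0 := by
          intro hc
          have : biasedKernel P F P' F' α (some s₀) (some c) = 0 := by
            rw [bk_some_some, hc, ENNReal.zero_div]
          rw [this] at hK1
          exact absurd hK1 (lt_irrefl 0)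
        have hKtop : biasedKernel P F P' F' α (some s₀) (some c) = ⊤ := by
          rw [bk_some_some, h0, ENNReal.div_zero hnum]
        rw [hsplit, hKtop, ENNReal.top_mul hK2.ne', ENNReal.div_top, h0]
    · -- generic case: telescoping
      have hall0 : ∀ s ∈ (s₀ :: mt : List (SA P F)), reachProb P' F' (α s) ≠ 0 := by
        intro s hs
        obtain ⟨⟨iv, hiv⟩, hi⟩ := List.mem_iff_get.mp hs
        cases iv with
        | zero =>
          have : s₀ = s := hi
          rw [← this]; exact h0
        | succ j =>
          intro hc
          have hjlen : j + 1 < ((s₀ :: mt).map some).length := by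
            simpa using hiv
          have hstep := pathProb_step_pos ((s₀ :: mt).map some) hposm j hjlen
          rw [get_map_aux, get_map_aux] at hstep
          have hget : (s₀ :: mt).get ⟨j + 1, by simpa using hjlen⟩ = s := hi
          rw [hget] at hstep
          have : biasedKernel P F P' F' α
              (some ((s₀ :: mt).get ⟨j, by simp at hjlen ⊢; omega⟩)) (some s) = 0 := by
            rw [bk_some_some, hc, mul_zero, ENNReal.zero_div]
          rw [this] at hstep
          exact absurd hstep (lt_irrefl 0)
      have htele := tele P F P' F' α mt s₀ hall0 (fun s _ => hμtop s)
      rw [hμlast, mul_one] at htele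
      have hb0 : pathProb (biasedKernel P F P' F' α) ((s₀ :: mt).map some) ≠ 0 := hposm.ne'
      have hbtop : pathProb (biasedKernel P F P' F' α) ((s₀ :: mt).map some) ≠ ⊤ := by
        intro hc
        rw [hc, ENNReal.mul_top h0] at htele
        have := pathProb_le_one hP ((s₀ :: mt).map Subtype.val)
        rw [← htele] at this
        exact absurd this (by simp)
      rw [← htele, mul_div_assoc, ENNReal.div_self hb0 hbtop, mul_one]
  -- assemble
  rw [hcons] at hfhv
  have hratio' : ((pathProb P ((l.reduceOption).map Subtype.val) /
      pathProb (biasedKernel P F P' F' α) l)).toReal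
      = (reachProb P' F' (α s₀)).toReal := by
    rw [hcons, hlm2, hratio]
  have hB : |L ((s₀ :: mt).map Subtype.val)| ≤ B := hbdd s₀.val _ hfhv
  have hBnn : 0 ≤ B := (abs_nonneg _).trans hB
  have ht1 : (reachProb P' F' (α s₀)).toReal ≤ 1 := by
    have := ENNReal.toReal_mono ENNReal.one_ne_top (hμle s₀)
    simpa using this
  refine ⟨?_, ?_, ?_⟩
  · rw [if_neg hnone, hratio']
  · rw [if_neg hnone, hratio', hcons]
    calc |L ((s₀ :: mt).map Subtype.val) * (reachProb P' F' (α s₀)).toReal|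
        = |L ((s₀ :: mt).map Subtype.val)| * (reachProb P' F' (α s₀)).toReal := by
          rw [abs_mul, abs_of_nonneg ENNReal.toReal_nonneg]
      _ ≤ B * 1 := mul_le_mul hB ht1 ENNReal.toReal_nonneg hBnn
      _ = B := mul_one B
  · intro hL
    rw [if_neg hnone, hratio', hL, one_mul]


end Thms
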